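/- The functions I_n(x) = √π·∫₀^∞ μ^{2n}·e^{−μ²/x}·erf(μ) dμ satisfy the recursion I_{n+1}(x) = ((2n+1)x/2)·I_n(x) + (x·n!/2)·(x/(x+1))^{n+1} for x > 0. -/

import Mathlib

open MeasureTheory Real
open Set Filter Asymptotics

/-- The error function. -/
noncomputable def erf (x : ℝ) : ℝ := (2 / Real.sqrt π) * ∫ t in (0:ℝ)..x, Real.exp (-t ^ 2)

/-- The family of integrals `I_n(x) = √π ∫₀^∞ μ^(2n) e^(−μ²/x) erf(μ) dμ`. -/
noncomputable def In (n : ℕ) (x : ℝ) : ℝ :=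
  Real.sqrt π * ∫ μ in Set.Ioi (0:ℝ), μ ^ (2 * n) * Real.exp (-μ ^ 2 / x) * erf μ

lemma erf_hasDerivAt (y : ℝ) :
    HasDerivAt erf (2 / Real.sqrt π * Real.exp (-y ^ 2)) y := by
  have hc : Continuous fun t : ℝ => Real.exp (-t ^ 2) := by continuity
  have h := (intervalIntegral.integral_hasDerivAt_right
    (hc.intervalIntegrable 0 y) (hc.stronglyMeasurableAtFilter _ _)
    hc.continuousAt)
  exact h.const_mul (2 / Real.sqrt π)

lemma erf_cont : Continuous erf := by
  have : ∀ y : ℝ, ContinuousAt erf y := fun y => (erf_hasDerivAt y).continuousAt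
  exact continuous_iff_continuousAt.mpr this

lemma erf_nonneg {y : ℝ} (hy : 0 ≤ y) : 0 ≤ erf y := by
  unfold erf
  apply mul_nonneg (by positivity)
  apply intervalIntegral.integral_nonneg hy
  intro t _; positivity

lemma erf_le_one {y : ℝ} (hy : 0 ≤ y) : erf y ≤ 1 := by
  have hint : IntegrableOn (fun t : ℝ => Real.exp (-t ^ 2)) (Ioi 0) := by
    simpa using integrableOn_rpow_mul_exp_neg_mul_sq one_pos (s := 0) (by norm_num)
  have h1 : (∫ t in (0:ℝ)..y, Real.exp (-t ^ 2)) ≤ ∫ t in Ioi (0:ℝ), Real.exp (-t ^ 2) := by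
    rw [intervalIntegral.integral_of_le hy]
    apply setIntegral_mono_set hint
    · filter_upwards with t using (Real.exp_pos _).le
    · exact HasSubset.Subset.eventuallyLE Ioc_subset_Ioi_self
  have h2 : (∫ t in Ioi (0:ℝ), Real.exp (-t ^ 2)) = Real.sqrt π / 2 := by
    simpa using integral_gaussian_Ioi 1
  unfold erf
  rw [h2] at h1
  have hs : (0:ℝ) < Real.sqrt π := Real.sqrt_pos.mpr Real.pi_pos
  rw [div_mul_eq_mul_div, div_le_one hs]
  nlinarith [h1]

lemma pow_mul_exp_integrableOn {b : ℝ} (hb : 0 < b) (k : ℕ) :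
    IntegrableOn (fun μ : ℝ => μ ^ k * Real.exp (-b * μ ^ 2)) (Ioi 0) := by
  have := integrableOn_rpow_mul_exp_neg_mul_sq hb (s := (k : ℝ)) (neg_one_lt_zero.trans_le (Nat.cast_nonneg k))
  simpa [Real.rpow_natCast] using this

lemma pow_mul_exp_tendsto {b : ℝ} (hb : 0 < b) (k : ℕ) :
    Tendsto (fun μ : ℝ => μ ^ k * Real.exp (-b * μ ^ 2)) atTop (nhds 0) := by
  have h := rpow_mul_exp_neg_mul_sq_isLittleO_exp_neg hb (k : ℝ)
  simp_rw [Real.rpow_natCast] at h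
  apply h.tendsto_zero_of_tendsto
  have hlin : Tendsto (fun x : ℝ => -(1/2) * x) atTop atBot :=
    Filter.Tendsto.const_mul_atTop_of_neg (by norm_num) tendsto_id
  exact Real.tendsto_exp_atBot.comp hlin

lemma gaussian_moment {a : ℝ} (ha : 0 < a) (n : ℕ) :
    ∫ μ in Ioi (0:ℝ), μ ^ (2 * n + 1) * Real.exp (-a * μ ^ 2)
      = n.factorial / (2 * a ^ (n + 1)) := by
  induction n with
  | zero =>
      have hderiv : ∀ μ ∈ Ioi (0:ℝ),
          HasDerivAt (fun μ : ℝ => -(2 * a)⁻¹ * Real.exp (-a * μ ^ 2))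
            (μ ^ (2 * 0 + 1) * Real.exp (-a * μ ^ 2)) μ := by
        intro μ _
        have h1 : HasDerivAt (fun μ : ℝ => -a * μ ^ 2) (-a * (2 * μ)) μ := by
          simpa using ((hasDerivAt_pow 2 μ).const_mul (-a))
        have := (h1.exp).const_mul (-(2 * a)⁻¹)
        refine this.congr_deriv ?_
        field_simp
        ring
      have htd : Tendsto (fun μ : ℝ => -(2 * a)⁻¹ * Real.exp (-a * μ ^ 2)) atTop (nhds 0) := by
        have := (pow_mul_exp_tendsto ha 0).const_mul (-(2 * a)⁻¹)
        simpa using this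
      have := integral_Ioi_of_hasDerivAt_of_tendsto
        (f := fun μ : ℝ => -(2 * a)⁻¹ * Real.exp (-a * μ ^ 2))
        (Continuous.continuousWithinAt (by continuity)) hderiv (pow_mul_exp_integrableOn ha 1 |>.congr_fun
          (fun μ _ => by norm_num) measurableSet_Ioi) htd
      rw [this]
      simp
  | succ n ih =>
      have hderiv : ∀ μ ∈ Ioi (0:ℝ),
          HasDerivAt (fun μ : ℝ => μ ^ (2 * n + 2) * Real.exp (-a * μ ^ 2))
            ((2 * n + 2) * (μ ^ (2 * n + 1) * Real.exp (-a * μ ^ 2))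
              - 2 * a * (μ ^ (2 * n + 3) * Real.exp (-a * μ ^ 2))) μ := by
        intro μ _
        have h1 : HasDerivAt (fun μ : ℝ => -a * μ ^ 2) (-a * (2 * μ)) μ := by
          simpa using ((hasDerivAt_pow 2 μ).const_mul (-a))
        have := (hasDerivAt_pow (2 * n + 2) μ).mul h1.exp
        refine this.congr_deriv ?_
        push_cast
        ring
      have htd : Tendsto (fun μ : ℝ => μ ^ (2 * n + 2) * Real.exp (-a * μ ^ 2)) atTop (nhds 0) :=
        pow_mul_exp_tendsto ha _
      have hint1 := pow_mul_exp_integrableOn ha (2 * n + 1)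
      have hint3 := pow_mul_exp_integrableOn ha (2 * n + 3)
      have key := integral_Ioi_of_hasDerivAt_of_tendsto
        (f := fun μ : ℝ => μ ^ (2 * n + 2) * Real.exp (-a * μ ^ 2))
        (Continuous.continuousWithinAt (by continuity)) hderiv
        ((hint1.const_mul _).sub (hint3.const_mul _)) htd
      rw [integral_sub (hint1.const_mul _) (hint3.const_mul _),
        integral_const_mul, integral_const_mul] at key
      have h0 : (0:ℝ) ^ (2 * n + 2) * Real.exp (-a * 0 ^ 2) = 0 := by simp
      rw [h0] at key
      rw [ih] at key
      have ha' : a ≠ 0 := ne_of_gt ha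
      have hpow : (0:ℝ) < a ^ (n + 1) := pow_pos ha _
      have hJ : ∫ μ in Ioi (0:ℝ), μ ^ (2 * n + 3) * Real.exp (-a * μ ^ 2)
          = ((2 * n : ℝ) + 2) * ((n.factorial : ℝ) / (2 * a ^ (n + 1))) / (2 * a) := by
        have h2a : (2 * a) ≠ 0 := by positivity
        field_simp at key ⊢
        push_cast at key ⊢
        nlinarith [key]
      rw [show 2 * (n + 1) + 1 = 2 * n + 3 from by ring, hJ, Nat.factorial_succ]
      rw [pow_succ]
      push_cast
      field_simp
      ring

lemma erf_integrand_integrableOn {b : ℝ} (hb : 0 < b) (k : ℕ) :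
    IntegrableOn (fun μ : ℝ => μ ^ k * Real.exp (-b * μ ^ 2) * erf μ) (Ioi 0) := by
  apply (pow_mul_exp_integrableOn hb k).mono'
  · exact (Continuous.aestronglyMeasurable
      (((continuous_pow k).mul (by continuity)).mul erf_cont)).restrict
  · filter_upwards [ae_restrict_mem measurableSet_Ioi] with μ hμ
    have hμ0 : (0:ℝ) ≤ μ := le_of_lt hμ
    rw [Real.norm_eq_abs, abs_mul, abs_mul, abs_of_nonneg (pow_nonneg hμ0 k),
      abs_of_nonneg (Real.exp_pos _).le, abs_of_nonneg (erf_nonneg hμ0)]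
    exact mul_le_of_le_one_right
      (mul_nonneg (pow_nonneg hμ0 k) (Real.exp_pos _).le) (erf_le_one hμ0)


theorem stmt_15 (n : ℕ) (x : ℝ) (hx : 0 < x) :
    In (n + 1) x = ((2 * n + 1) * x / 2) * In n x +
      (x * (n : ℕ).factorial / 2) * (x / (x + 1)) ^ (n + 1) := by
  have hb : (0:ℝ) < x⁻¹ := inv_pos.mpr hx
  have h1b : (0:ℝ) < 1 + x⁻¹ := by linarith
  have hsπ : (0:ℝ) < Real.sqrt π := Real.sqrt_pos.mpr Real.pi_pos
  set A := ∫ μ in Ioi (0:ℝ), μ ^ (2 * n) * Real.exp (-x⁻¹ * μ ^ 2) * erf μ with hA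
  set C := ∫ μ in Ioi (0:ℝ), μ ^ (2 * n + 2) * Real.exp (-x⁻¹ * μ ^ 2) * erf μ with hC
  -- the function for integration by parts
  set F : ℝ → ℝ := fun μ => μ ^ (2 * n + 1) * Real.exp (-x⁻¹ * μ ^ 2) * erf μ with hF
  have hderiv : ∀ μ ∈ Ioi (0:ℝ), HasDerivAt F
      ((2 * n + 1 : ℝ) * (μ ^ (2 * n) * Real.exp (-x⁻¹ * μ ^ 2) * erf μ)
        - 2 * x⁻¹ * (μ ^ (2 * n + 2) * Real.exp (-x⁻¹ * μ ^ 2) * erf μ)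
        + (2 / Real.sqrt π) * (μ ^ (2 * n + 1) * Real.exp (-(1 + x⁻¹) * μ ^ 2))) μ := by
    intro μ _
    have h1 : HasDerivAt (fun μ : ℝ => -x⁻¹ * μ ^ 2) (-x⁻¹ * (2 * μ)) μ := by
      simpa using ((hasDerivAt_pow 2 μ).const_mul (-x⁻¹))
    have h2 := ((hasDerivAt_pow (2 * n + 1) μ).mul h1.exp).mul (erf_hasDerivAt μ)
    refine h2.congr_deriv ?_
    simp only [Pi.mul_apply]
    rw [show -(1 + x⁻¹) * μ ^ 2 = -x⁻¹ * μ ^ 2 + -μ ^ 2 from by ring, Real.exp_add]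
    push_cast
    ring
  have htd : Tendsto F atTop (nhds 0) := by
    apply squeeze_zero' (g := fun μ : ℝ => μ ^ (2 * n + 1) * Real.exp (-x⁻¹ * μ ^ 2))
    · filter_upwards [eventually_ge_atTop (0:ℝ)] with μ hμ
      exact mul_nonneg (mul_nonneg (pow_nonneg hμ _) (Real.exp_pos _).le) (erf_nonneg hμ)
    · filter_upwards [eventually_ge_atTop (0:ℝ)] with μ hμ
      exact mul_le_of_le_one_right
        (mul_nonneg (pow_nonneg hμ _) (Real.exp_pos _).le) (erf_le_one hμ)
    · exact pow_mul_exp_tendsto hb _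
  have i1 : IntegrableOn (fun μ : ℝ =>
      (2 * n + 1 : ℝ) * (μ ^ (2 * n) * Real.exp (-x⁻¹ * μ ^ 2) * erf μ)) (Ioi 0) :=
    (erf_integrand_integrableOn hb (2 * n)).const_mul _
  have i2 : IntegrableOn (fun μ : ℝ =>
      2 * x⁻¹ * (μ ^ (2 * n + 2) * Real.exp (-x⁻¹ * μ ^ 2) * erf μ)) (Ioi 0) :=
    (erf_integrand_integrableOn hb (2 * n + 2)).const_mul _
  have i3 : IntegrableOn (fun μ : ℝ =>
      (2 / Real.sqrt π) * (μ ^ (2 * n + 1) * Real.exp (-(1 + x⁻¹) * μ ^ 2))) (Ioi 0) :=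
    (pow_mul_exp_integrableOn h1b (2 * n + 1)).const_mul _
  have key := integral_Ioi_of_hasDerivAt_of_tendsto
    (Continuous.continuousWithinAt
      (((continuous_pow (2 * n + 1)).mul (by continuity)).mul erf_cont))
    hderiv ((i1.sub i2).add i3) htd
  have i12 : IntegrableOn (fun μ : ℝ =>
      (2 * n + 1 : ℝ) * (μ ^ (2 * n) * Real.exp (-x⁻¹ * μ ^ 2) * erf μ)
        - 2 * x⁻¹ * (μ ^ (2 * n + 2) * Real.exp (-x⁻¹ * μ ^ 2) * erf μ)) (Ioi 0) := i1.sub i2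
  rw [integral_add i12 i3, integral_sub i1 i2, integral_const_mul, integral_const_mul,
    integral_const_mul, gaussian_moment h1b n] at key
  simp only [Pi.mul_apply] at key
  rw [show (0:ℝ) - 0 ^ (2 * n + 1) * Real.exp (-x⁻¹ * 0 ^ 2) * erf 0 = 0 from by simp] at key
  -- rewrite In in terms of A and C
  have e1 : In (n + 1) x = Real.sqrt π * C := by
    rw [In]
    congr 1
    apply setIntegral_congr_fun measurableSet_Ioi
    intro μ _
    dsimp only
    rw [show 2 * (n + 1) = 2 * n + 2 from by ring, show -μ ^ 2 / x = -x⁻¹ * μ ^ 2 from by ring]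
  have e0 : In n x = Real.sqrt π * A := by
    rw [In]
    congr 1
    apply setIntegral_congr_fun measurableSet_Ioi
    intro μ _
    dsimp only
    rw [show -μ ^ 2 / x = -x⁻¹ * μ ^ 2 from by ring]
  rw [e1, e0]
  rw [← hA, ← hC] at key
  -- final algebra
  have hinv : (1 + x⁻¹) * (x / (x + 1)) = 1 := by field_simp
  have hpowinv : (1 + x⁻¹) ^ (n + 1) * (x / (x + 1)) ^ (n + 1) = 1 := by
    rw [← mul_pow, hinv, one_pow]
  have hx' : x ≠ 0 := ne_of_gt hx
  have hp1 : (0:ℝ) < (1 + x⁻¹) ^ (n + 1) := pow_pos h1b _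
  have hπ : Real.sqrt π ≠ 0 := ne_of_gt hsπ
  set M := (n.factorial : ℝ) / (2 * (1 + x⁻¹) ^ (n + 1)) with hM
  have keyC : C = x / 2 * ((2 * n + 1 : ℝ) * A + 2 / Real.sqrt π * M) := by
    have h2 : 2 * x⁻¹ * C = (2 * n + 1 : ℝ) * A + 2 / Real.sqrt π * M := by linarith
    have h3 : C = (2 * x⁻¹)⁻¹ * ((2 * n + 1 : ℝ) * A + 2 / Real.sqrt π * M) := by
      rw [← h2, ← mul_assoc, inv_mul_cancel₀ (by positivity : (2 * x⁻¹ : ℝ) ≠ 0), one_mul]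
    rw [h3, mul_inv, inv_inv]
    ring
  rw [keyC]
  have hq : (x / (x + 1)) ^ (n + 1) = ((1 + x⁻¹) ^ (n + 1))⁻¹ :=
    eq_inv_of_mul_eq_one_left (by rw [mul_comm]; exact hpowinv)
  rw [hq, hM]
  field_simp
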